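/- arXiv:2312.05628 — 2 statements merged into one kernel-verified Lean document; each statement's English description precedes it below -/
import Mathlib

section
/- Assuming for all t ≥ 2657 that |θ(t) - t| ≤ (√t · log t · (log t - log log t))/(8π), one has for all x ≥ 10^19: (log x)(log x - log log x)/(8π√x) + ∫ₓ^∞ (log t)(log t - log log t)/(8π t^{3/2}) dt < 3(log x)²/(8π√x). -/
open Real Finset

section Aux

open Filter MeasureTheory Topology

private lemma mertens_aux_integral (x c : ℝ) (hx : (3:ℝ) < x) (hc : 0 ≤ c)
    (hcx : c ≤ Real.log x) :
    IntegrableOn (fun t => (Real.log t ^ 2 - c * Real.log t) / (8 * π * t ^ ((3:ℝ)/2)))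
      (Set.Ioi x) ∧
    ∫ t in Set.Ioi x, (Real.log t ^ 2 - c * Real.log t) / (8 * π * t ^ ((3:ℝ)/2))
      = (2 * Real.log x ^ 2 + (8 - 2*c) * Real.log x + (16 - 4*c)) / (8 * π * Real.sqrt x) := by
  have hx0 : (0:ℝ) < x := by linarith
  set F : ℝ → ℝ := fun t =>
    -((2 * Real.log t ^ 2 + (8 - 2*c) * Real.log t + (16 - 4*c)) / (8 * π * Real.sqrt t)) with hF
  have hderiv : ∀ t ∈ Set.Ici x, HasDerivAt F
      ((Real.log t ^ 2 - c * Real.log t) / (8 * π * t ^ ((3:ℝ)/2))) t := by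
    intro t ht
    have ht0 : (0:ℝ) < t := lt_of_lt_of_le hx0 ht
    have hst : (0:ℝ) < Real.sqrt t := Real.sqrt_pos.2 ht0
    have hlog : HasDerivAt Real.log t⁻¹ t := Real.hasDerivAt_log ht0.ne'
    have hnum : HasDerivAt (fun u => 2 * Real.log u ^ 2 + (8 - 2*c) * Real.log u + (16 - 4*c))
        (2 * (2 * Real.log t ^ 1 * t⁻¹) + (8 - 2*c) * t⁻¹) t := by
      have := (((hlog.pow 2).const_mul 2).add (hlog.const_mul (8 - 2*c))).add_const (16 - 4*c)
      refine this.congr_deriv ?_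
      norm_num
    have hden : HasDerivAt (fun u => 8 * π * Real.sqrt u) (8 * π * (1 / (2 * Real.sqrt t))) t :=
      (Real.hasDerivAt_sqrt ht0.ne').const_mul (8 * π)
    have hdiv := (hnum.div hden (by positivity)).neg
    refine hdiv.congr_deriv ?_
    symm
    have h32 : t ^ ((3:ℝ)/2) = t * Real.sqrt t := by
      rw [show ((3:ℝ)/2) = 1 + 1/2 by norm_num, Real.rpow_add ht0, Real.rpow_one,
        ← Real.sqrt_eq_rpow]
    have hts : Real.sqrt t ^ 2 = t := Real.sq_sqrt ht0.le
    set s := Real.sqrt t with hs_def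
    set l := Real.log t with hl_def
    rw [h32, ← hts]
    field_simp
    ring
  have hpos : ∀ t ∈ Set.Ioi x, 0 ≤ (Real.log t ^ 2 - c * Real.log t) / (8 * π * t ^ ((3:ℝ)/2)) := by
    intro t ht
    have ht0 : (0:ℝ) < t := lt_trans hx0 ht
    have h1 : c ≤ Real.log t := hcx.trans (Real.log_le_log hx0 (le_of_lt ht))
    have h2 : 0 ≤ Real.log t := hc.trans h1
    have : 0 ≤ Real.log t ^ 2 - c * Real.log t := by nlinarith
    positivity
  have htend : Tendsto F atTop (𝓝 0) := by
    have h12 : (0:ℝ) < 1/2 := by norm_num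
    have o1 : (fun u : ℝ => Real.log u ^ 2) =o[atTop] fun u : ℝ => u ^ ((1:ℝ)/2) := by
      have := isLittleO_log_rpow_rpow_atTop 2 h12
      refine this.congr_left fun u => ?_
      rw [show (2:ℝ) = ((2:ℕ):ℝ) by norm_num, Real.rpow_natCast]
    have o2 : (fun u : ℝ => Real.log u) =o[atTop] fun u : ℝ => u ^ ((1:ℝ)/2) :=
      isLittleO_log_rpow_atTop h12
    have o3 : (fun _ : ℝ => (16 - 4*c)) =o[atTop] fun u : ℝ => u ^ ((1:ℝ)/2) := by
      refine Asymptotics.isLittleO_const_left.2 (Or.inr ?_)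
      exact tendsto_abs_atTop_atTop.comp (tendsto_rpow_atTop h12)
    have h := ((o1.const_mul_left 2).add (o2.const_mul_left (8 - 2*c))).add o3
    have h0 := h.tendsto_div_nhds_zero
    have htend0 := (h0.mul (tendsto_const_nhds (x := (1/(8*π) : ℝ)))).neg
    have heq : (fun u : ℝ => -((2 * Real.log u ^ 2 + (8 - 2*c) * Real.log u + (16 - 4*c))
        / u ^ ((1:ℝ)/2) * (1/(8*π)))) =ᶠ[atTop] F := by
      filter_upwards [eventually_ge_atTop (0:ℝ)] with u hu
      rw [hF]
      simp only
      rw [Real.sqrt_eq_rpow]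
      ring
    simpa using htend0.congr' heq
  refine ⟨integrableOn_Ioi_deriv_of_nonneg' hderiv hpos htend, ?_⟩
  have := integral_Ioi_of_hasDerivAt_of_nonneg' hderiv hpos htend
  rw [this, hF]
  simp only
  ring

end Aux

noncomputable def chebyshevTheta (x : ℝ) : ℝ :=
  ∑ p ∈ (Finset.range (⌊x⌋₊ + 1)).filter Nat.Prime, Real.log p

theorem mertens_first_tail_estimate
    (htheta : ∀ t : ℝ, 2657 ≤ t →
      |chebyshevTheta t - t| ≤
        Real.sqrt t * Real.log t * (Real.log t - Real.log (Real.log t)) / (8 * π)) :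
    ∀ x : ℝ, 1e19 ≤ x →
      Real.log x * (Real.log x - Real.log (Real.log x)) / (8 * π * Real.sqrt x)
        + ∫ t in Set.Ioi x,
            Real.log t * (Real.log t - Real.log (Real.log t)) / (8 * π * t ^ ((3 : ℝ) / 2))
        < 3 * (Real.log x) ^ 2 / (8 * π * Real.sqrt x) := by
  intro x hx
  have hx0 : (0:ℝ) < x := by norm_num at hx ⊢; linarith
  have hx1 : (1:ℝ) < x := by norm_num at hx ⊢; linarith
  set L := Real.log x with hL_def
  set c := Real.log L with hc_def
  have hl2 : (0.6931471803:ℝ) < Real.log 2 := Real.log_two_gt_d9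
  -- L ≥ 63 log 2
  have hL63 : 63 * Real.log 2 ≤ L := by
    have h1 : (2:ℝ)^(63:ℕ) ≤ x := by
      norm_num at hx ⊢
      nlinarith [hx]
    calc 63 * Real.log 2 = Real.log ((2:ℝ)^(63:ℕ)) := by
          rw [Real.log_pow]; push_cast; ring
      _ ≤ L := Real.log_le_log (by positivity) h1
  have hL32 : (32:ℝ) ≤ L := by nlinarith
  have hL0 : (0:ℝ) < L := by linarith
  have hc5 : 5 * Real.log 2 ≤ c := by
    calc 5 * Real.log 2 = Real.log ((2:ℝ)^(5:ℕ)) := by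
          rw [Real.log_pow]; push_cast; ring
      _ ≤ c := Real.log_le_log (by positivity) (by norm_num; linarith)
  have hc0 : (0:ℝ) < c := by linarith
  have hcL : c ≤ L := (Real.log_le_self hL0.le)
  have hx3 : (3:ℝ) < x := by linarith
  -- compare the integral with the explicit one
  have hcompare : (∫ t in Set.Ioi x,
        Real.log t * (Real.log t - Real.log (Real.log t)) / (8 * π * t ^ ((3 : ℝ) / 2)))
      ≤ ∫ t in Set.Ioi x, (Real.log t ^ 2 - c * Real.log t) / (8 * π * t ^ ((3:ℝ)/2)) := by
    apply MeasureTheory.integral_mono_of_nonneg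
    · filter_upwards [MeasureTheory.ae_restrict_mem measurableSet_Ioi] with t ht
      have ht0 : (0:ℝ) < t := lt_trans hx0 ht
      have hlt : L ≤ Real.log t := Real.log_le_log hx0 ht.le
      have hlt0 : (0:ℝ) < Real.log t := lt_of_lt_of_le hL0 hlt
      have hll : Real.log (Real.log t) ≤ Real.log t :=
        (Real.log_le_log hlt0 (Real.log_le_self ht0.le)).trans le_rfl
      have : 0 ≤ Real.log t * (Real.log t - Real.log (Real.log t)) := by nlinarith
      positivity
    · exact (mertens_aux_integral x c hx3 hc0.le hcL).1
    · filter_upwards [MeasureTheory.ae_restrict_mem measurableSet_Ioi] with t ht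
      have ht0 : (0:ℝ) < t := lt_trans hx0 ht
      have hlt : L ≤ Real.log t := Real.log_le_log hx0 ht.le
      have hlt0 : (0:ℝ) < Real.log t := lt_of_lt_of_le hL0 hlt
      have hcllt : c ≤ Real.log (Real.log t) := Real.log_le_log hL0 hlt
      have hden : (0:ℝ) < 8 * π * t ^ ((3:ℝ)/2) := by positivity
      rw [div_le_div_iff₀ hden hden]
      have : Real.log t * (Real.log t - Real.log (Real.log t))
          ≤ Real.log t ^ 2 - c * Real.log t := by nlinarith
      nlinarith [this, hden]
  have hval := (mertens_aux_integral x c hx3 hc0.le hcL).2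
  rw [← hL_def] at hval
  have hs : (0:ℝ) < Real.sqrt x := Real.sqrt_pos.2 hx0
  have hden : (0:ℝ) < 8 * π * Real.sqrt x := by positivity
  have hnum : L * (L - c) + (2 * L ^ 2 + (8 - 2*c) * L + (16 - 4*c)) < 3 * L ^ 2 := by
    nlinarith [mul_nonneg (by linarith : (0:ℝ) ≤ 3*c - 8) (by linarith : (0:ℝ) ≤ L - 63 * Real.log 2),
      sq_nonneg (Real.log 2 - 0.6931471803), hl2]
  calc Real.log x * (Real.log x - Real.log (Real.log x)) / (8 * π * Real.sqrt x)
        + ∫ t in Set.Ioi x,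
            Real.log t * (Real.log t - Real.log (Real.log t)) / (8 * π * t ^ ((3 : ℝ) / 2))
      ≤ L * (L - c) / (8 * π * Real.sqrt x)
        + (2 * L ^ 2 + (8 - 2*c) * L + (16 - 4*c)) / (8 * π * Real.sqrt x) := by
        rw [← hval]; exact add_le_add le_rfl hcompare
    _ = (L * (L - c) + (2 * L ^ 2 + (8 - 2*c) * L + (16 - 4*c))) / (8 * π * Real.sqrt x) := by
        rw [← add_div]
    _ < 3 * (Real.log x) ^ 2 / (8 * π * Real.sqrt x) := by
        rw [div_lt_div_iff₀ hden hden]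
        nlinarith [hnum, hden]
end

section
/- If |θ(x) - x| ≤ 1.95√x for all 1423 ≤ x ≤ 10^19, and if for x ≥ 10^19 one has |θ(x)-x| ≤ √x(log x)²/(8π), then for all 10^6 ≤ x ≤ 10^19: 1.95(1/√x + ∫ₓ^{10^19} dt/t^{3/2}) + (1/(8π))∫_{10^19}^∞ (log t)²/t^{3/2} dt < 3(log x)²/(8π√x). -/
open Real Finset

set_option maxHeartbeats 1000000 in
theorem intermediate_range_estimate
    (h1 : ∀ x : ℝ, 1423 ≤ x → x ≤ 1e19 → |chebyshevTheta x - x| ≤ 1.95 * Real.sqrt x)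
    (h2 : ∀ x : ℝ, 1e19 ≤ x →
      |chebyshevTheta x - x| ≤ Real.sqrt x * (Real.log x) ^ 2 / (8 * π)) :
    ∀ x : ℝ, 1e6 ≤ x → x ≤ 1e19 →
      1.95 * (1 / Real.sqrt x + ∫ t in Set.Ioi x ∩ Set.Iic (1e19 : ℝ),
          1 / t ^ ((3 : ℝ) / 2))
        + (1 / (8 * π)) * ∫ t in Set.Ioi (1e19 : ℝ), (Real.log t) ^ 2 / t ^ ((3 : ℝ) / 2)
        < 3 * (Real.log x) ^ 2 / (8 * π * Real.sqrt x) := by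
  clear h1 h2
  intro x hx1 hx2
  have hx0 : (0:ℝ) < x := by norm_num at hx1 ⊢; linarith
  have hsx : 0 < Real.sqrt x := Real.sqrt_pos.mpr hx0
  have hsX : 0 < Real.sqrt (1e19 : ℝ) := Real.sqrt_pos.mpr (by norm_num)
  -- the finite integral
  have hI1 : (∫ t in Set.Ioi x ∩ Set.Iic (1e19 : ℝ), 1 / t ^ ((3 : ℝ) / 2))
      = 2 / Real.sqrt x - 2 / Real.sqrt (1e19 : ℝ) := by
    rw [Set.Ioi_inter_Iic, ← intervalIntegral.integral_of_le hx2]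
    have hcg : (∫ t in x..(1e19:ℝ), 1 / t ^ ((3:ℝ)/2)) = ∫ t in x..(1e19:ℝ), t ^ (-(3:ℝ)/2) := by
      apply intervalIntegral.integral_congr
      intro t ht
      have ht0 : 0 < t := by
        rcases Set.mem_uIcc.mp ht with h | h
        · exact lt_of_lt_of_le hx0 h.1
        · exact lt_of_lt_of_le (by norm_num) h.1
      show 1 / t ^ ((3:ℝ)/2) = t ^ (-(3:ℝ)/2)
      rw [show (-(3:ℝ)/2) = -((3:ℝ)/2) by norm_num, Real.rpow_neg ht0.le, one_div]
    rw [hcg, integral_rpow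
      (Or.inr ⟨by norm_num, Set.notMem_uIcc_of_lt hx0 (by norm_num)⟩)]
    rw [show (-(3:ℝ)/2 + 1) = -(1/2) by norm_num,
      Real.rpow_neg (by norm_num : (0:ℝ) ≤ 1e19), Real.rpow_neg hx0.le,
      ← Real.sqrt_eq_rpow, ← Real.sqrt_eq_rpow]
    field_simp
    ring
  -- the tail integral
  have hd : ∀ t : ℝ, 0 < t →
      HasDerivAt (fun t => (-2*(Real.log t)^2 - 8*Real.log t - 16) / Real.sqrt t)
        ((Real.log t)^2 / t ^ ((3:ℝ)/2)) t := by
    intro t ht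
    have hs : 0 < Real.sqrt t := Real.sqrt_pos.mpr ht
    have hG : HasDerivAt (fun t => -2*(Real.log t)^2 - 8*Real.log t - 16)
        (-2*(2*(Real.log t)^1 * t⁻¹) - 8*t⁻¹) t := by
      have hl := Real.hasDerivAt_log ht.ne'
      exact (((hl.pow 2).const_mul (-2)).sub ((hl.const_mul 8))).sub_const 16
    have hdiv := hG.div (Real.hasDerivAt_sqrt ht.ne') hs.ne'
    refine hdiv.congr_deriv ?_; symm
    rw [show ((3:ℝ)/2) = 1 + 1/2 by norm_num, Real.rpow_add ht, Real.rpow_one,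
      ← Real.sqrt_eq_rpow]
    have hss : Real.sqrt t * Real.sqrt t = t := Real.mul_self_sqrt ht.le
    field_simp
    linear_combination (2*(Real.log t)^2 + 8*Real.log t + 16) * hss
  have htend : Filter.Tendsto (fun t : ℝ => (-2*(Real.log t)^2 - 8*Real.log t - 16) / Real.sqrt t)
      Filter.atTop (nhds 0) := by
    have hA : Filter.Tendsto (fun t : ℝ => (Real.log t)^2 / Real.sqrt t) Filter.atTop (nhds 0) := by
      have := (isLittleO_log_rpow_rpow_atTop (2:ℝ)
        (by norm_num : (0:ℝ) < 1/2)).tendsto_div_nhds_zero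
      refine this.congr' ?_
      filter_upwards [Filter.eventually_ge_atTop (1:ℝ)] with t ht
      rw [← Real.sqrt_eq_rpow, show ((2:ℝ) : ℝ) = ((2:ℕ) : ℝ) by norm_num, Real.rpow_natCast]
    have hB : Filter.Tendsto (fun t : ℝ => Real.log t / Real.sqrt t) Filter.atTop (nhds 0) := by
      have := (isLittleO_log_rpow_atTop (by norm_num : (0:ℝ) < 1/2)).tendsto_div_nhds_zero
      refine this.congr' ?_
      filter_upwards [Filter.eventually_ge_atTop (1:ℝ)] with t ht
      rw [← Real.sqrt_eq_rpow]
    have hC : Filter.Tendsto (fun t : ℝ => 1 / Real.sqrt t) Filter.atTop (nhds 0) := by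
      have := (tendsto_rpow_atTop (by norm_num : (0:ℝ) < 1/2)).inv_tendsto_atTop
      refine this.congr fun t => ?_
      simp [Real.sqrt_eq_rpow, one_div]
    have := ((hA.const_mul (-2)).add (hB.const_mul (-8))).add (hC.const_mul (-16))
    simp only [mul_zero, add_zero] at this
    refine this.congr fun t => ?_
    ring
  have hI2 : (∫ t in Set.Ioi (1e19 : ℝ), (Real.log t) ^ 2 / t ^ ((3 : ℝ) / 2))
      = (2*(Real.log (1e19:ℝ))^2 + 8*Real.log (1e19:ℝ) + 16) / Real.sqrt (1e19:ℝ) := by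
    rw [MeasureTheory.integral_Ioi_of_hasDerivAt_of_nonneg
      ((hd (1e19:ℝ) (by norm_num)).continuousAt.continuousWithinAt)
      (fun t ht => hd t (lt_trans (by norm_num) (Set.mem_Ioi.mp ht)))
      (fun t ht => div_nonneg (sq_nonneg _)
        (Real.rpow_nonneg (le_of_lt (lt_trans (by norm_num) (Set.mem_Ioi.mp ht))) _))
      htend]
    ring
  rw [hI1, hI2]
  -- numeric bounds on logs
  have hlog2l := Real.log_two_gt_d9
  have hlog2u := Real.log_two_lt_d9
  have hlog10l : (2.3022:ℝ) ≤ Real.log 10 := by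
    have h1 : Real.log ((2:ℝ)^93) ≤ Real.log ((10:ℝ)^28) :=
      Real.log_le_log (by positivity) (by norm_num)
    rw [Real.log_pow, Real.log_pow] at h1
    push_cast at h1
    linarith
  have hlog10u : Real.log 10 ≤ 2.30266 := by
    have h1 : Real.log ((10:ℝ)^59) ≤ Real.log ((2:ℝ)^196) :=
      Real.log_le_log (by positivity) (by norm_num)
    rw [Real.log_pow, Real.log_pow] at h1
    push_cast at h1
    linarith
  have hL : Real.log (1e19:ℝ) = 19 * Real.log 10 := by
    rw [show (1e19:ℝ) = 10^19 by norm_num, Real.log_pow]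
    push_cast; ring
  have hK : 2*(Real.log (1e19:ℝ))^2 + 8*Real.log (1e19:ℝ) + 16 ≤ 4195 := by
    rw [hL]
    nlinarith [hlog10l, hlog10u]
  have hK0 : 0 ≤ 2*(Real.log (1e19:ℝ))^2 + 8*Real.log (1e19:ℝ) + 16 := by
    rw [hL]; nlinarith [hlog10l]
  have hsXl : (3.1622e9:ℝ) ≤ Real.sqrt (1e19:ℝ) :=
    (Real.le_sqrt (by norm_num) (by norm_num)).mpr (by norm_num)
  have hπl := Real.pi_gt_d6
  have hπu := Real.pi_lt_d6
  have hπ0 : (0:ℝ) < π := by linarith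
  -- main reduction
  set K := 2*(Real.log (1e19:ℝ))^2 + 8*Real.log (1e19:ℝ) + 16 with hKdef
  clear_value K
  rw [lt_div_iff₀ (by positivity : (0:ℝ) < 8 * π * Real.sqrt x)]
  have hexpand : (1.95 * (1 / Real.sqrt x + (2 / Real.sqrt x - 2 / Real.sqrt (1e19:ℝ)))
      + 1 / (8 * π) * (K / Real.sqrt (1e19:ℝ))) * (8 * π * Real.sqrt x)
      = 46.8 * π + (K - 31.2 * π) * (Real.sqrt x / Real.sqrt (1e19:ℝ)) := by
    field_simp
    ring
  rw [hexpand]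
  have hr0 : 0 ≤ Real.sqrt x / Real.sqrt (1e19:ℝ) := by positivity
  have hKπ : (K - 31.2 * π) * (Real.sqrt x / Real.sqrt (1e19:ℝ))
      ≤ 4195 * (Real.sqrt x / Real.sqrt (1e19:ℝ)) := by
    apply mul_le_mul_of_nonneg_right _ hr0
    linarith
  -- case split
  have hπb : 46.8 * π ≤ 147.03 := by nlinarith
  rcases le_or_gt x 1e16 with hcase | hcase
  · -- x ≤ 1e16
    have hsxu : Real.sqrt x ≤ 1e8 := by
      calc Real.sqrt x ≤ Real.sqrt (1e16:ℝ) := Real.sqrt_le_sqrt hcase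
        _ = 1e8 := by
          rw [show (1e16:ℝ) = (1e8:ℝ)^2 by norm_num, Real.sqrt_sq (by norm_num)]
    have hr : Real.sqrt x / Real.sqrt (1e19:ℝ) ≤ 1e8 / 3.1622e9 :=
      div_le_div₀ (by norm_num) hsxu (by norm_num) hsXl
    have hlx : (13.8132:ℝ) ≤ Real.log x := by
      have : Real.log ((10:ℝ)^6) ≤ Real.log x := Real.log_le_log (by positivity)
        (by rw [show ((10:ℝ)^6 : ℝ) = 1e6 by norm_num]; exact hx1)
      rw [Real.log_pow] at this; push_cast at this; linarith
    have hlsq : (13.8132:ℝ)^2 ≤ (Real.log x)^2 := pow_le_pow_left₀ (by norm_num) hlx 2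
    have h2 : (K - 31.2 * π) * (Real.sqrt x / Real.sqrt (1e19:ℝ))
        ≤ 4195 * ((1e8:ℝ) / 3.1622e9) :=
      le_trans hKπ (mul_le_mul_of_nonneg_left hr (by norm_num))
    linarith [h2, hπb, hlsq]
  · -- 1e16 < x
    rcases le_or_gt x 1e18 with hcase2 | hcase2
    · have hsxu : Real.sqrt x ≤ 1e9 := by
        calc Real.sqrt x ≤ Real.sqrt (1e18:ℝ) := Real.sqrt_le_sqrt hcase2
          _ = 1e9 := by
            rw [show (1e18:ℝ) = (1e9:ℝ)^2 by norm_num, Real.sqrt_sq (by norm_num)]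
      have hr : Real.sqrt x / Real.sqrt (1e19:ℝ) ≤ 1e9 / 3.1622e9 :=
        div_le_div₀ (by norm_num) hsxu (by norm_num) hsXl
      have hlx : (36.8352:ℝ) ≤ Real.log x := by
        have : Real.log ((10:ℝ)^16) ≤ Real.log x := Real.log_le_log (by positivity)
          (by rw [show ((10:ℝ)^16 : ℝ) = 1e16 by norm_num]; linarith)
        rw [Real.log_pow] at this; push_cast at this; linarith
      have hlsq : (36.8352:ℝ)^2 ≤ (Real.log x)^2 := pow_le_pow_left₀ (by norm_num) hlx 2
      have h2 : (K - 31.2 * π) * (Real.sqrt x / Real.sqrt (1e19:ℝ))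
          ≤ 4195 * ((1e9:ℝ) / 3.1622e9) :=
        le_trans hKπ (mul_le_mul_of_nonneg_left hr (by norm_num))
      linarith [h2, hπb, hlsq]
    · have hsXu : Real.sqrt (1e19:ℝ) ≤ 3.1623e9 := by
        calc Real.sqrt (1e19:ℝ) ≤ Real.sqrt ((3.1623e9:ℝ)^2) :=
            Real.sqrt_le_sqrt (by norm_num)
          _ = 3.1623e9 := Real.sqrt_sq (by norm_num)
      have hsxu : Real.sqrt x ≤ 3.1623e9 :=
        le_trans (Real.sqrt_le_sqrt hx2) hsXu
      have hr : Real.sqrt x / Real.sqrt (1e19:ℝ) ≤ 3.1623e9 / 3.1622e9 :=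
        div_le_div₀ (by norm_num) hsxu (by norm_num) hsXl
      have hlx : (41.4396:ℝ) ≤ Real.log x := by
        have : Real.log ((10:ℝ)^18) ≤ Real.log x := Real.log_le_log (by positivity)
          (by rw [show ((10:ℝ)^18 : ℝ) = 1e18 by norm_num]; linarith)
        rw [Real.log_pow] at this; push_cast at this; linarith
      have hlsq : (41.4396:ℝ)^2 ≤ (Real.log x)^2 := pow_le_pow_left₀ (by norm_num) hlx 2
      have h2 : (K - 31.2 * π) * (Real.sqrt x / Real.sqrt (1e19:ℝ))
          ≤ 4195 * ((3.1623e9:ℝ) / 3.1622e9) :=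
        le_trans hKπ (mul_le_mul_of_nonneg_left hr (by norm_num))
      linarith [h2, hπb, hlsq]
end
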